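/- arXiv:1007.2117 — 5 statements merged into one kernel-verified Lean document; each statement's English description precedes it below -/
import Mathlib

section
/- For n = 2^p with p ≥ 4, among all decompositions n = m·2^k with m = 2^j, k = p − j (0 ≤ j ≤ p), the flop count F_S(2^j, p−j) is minimized at j = 3, i.e., F_S(8, p−3) ≤ F_S(2^j, p−j) for all 0 ≤ j ≤ p. -/
lemma strassen_key (i : ℕ) : 7 ^ i * 21 ≤ 4 ^ i * (16 * 2 ^ i + 5) := by
  induction i with
  | zero => norm_num
  | succ n ih =>
    have h2 : (1:ℕ) ≤ 2 ^ n := Nat.one_le_two_pow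
    have h4 : (0:ℕ) < 4 ^ n := Nat.pow_pos (by norm_num)
    calc 7 ^ (n+1) * 21 = 7 * (7 ^ n * 21) := by ring
      _ ≤ 7 * (4 ^ n * (16 * 2 ^ n + 5)) := by exact Nat.mul_le_mul_left _ ih
      _ ≤ 4 ^ (n+1) * (16 * 2 ^ (n+1) + 5) := by
          have : 7 * (16 * 2 ^ n + 5) ≤ 4 * (16 * 2 ^ (n+1) + 5) := by
            rw [pow_succ]; nlinarith
          calc 7 * (4 ^ n * (16 * 2 ^ n + 5)) = 4 ^ n * (7 * (16 * 2 ^ n + 5)) := by ring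
            _ ≤ 4 ^ n * (4 * (16 * 2 ^ (n+1) + 5)) := Nat.mul_le_mul_left _ this
            _ = 4 ^ (n+1) * (16 * 2 ^ (n+1) + 5) := by ring

lemma strassen_nat (p j : ℕ) (hp : 4 ≤ p) (hj : j ≤ p) :
    7 ^ (p - 3) * 1344 ≤ 7 ^ (p - j) * (4 ^ j * (2 * 2 ^ j + 5)) := by
  rcases le_or_gt j 3 with h | h
  · interval_cases j
    · rw [show p - 0 = (p - 3) + 3 by omega, pow_add]
      calc 7 ^ (p-3) * 1344 ≤ 7 ^ (p-3) * (7^3 * (4^0 * (2 * 2^0 + 5))) :=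
            Nat.mul_le_mul_left _ (by norm_num)
        _ = 7 ^ (p-3) * 7^3 * (4^0 * (2 * 2^0 + 5)) := by ring
    · rw [show p - 1 = (p - 3) + 2 by omega, pow_add]
      calc 7 ^ (p-3) * 1344 ≤ 7 ^ (p-3) * (7^2 * (4^1 * (2 * 2^1 + 5))) :=
            Nat.mul_le_mul_left _ (by norm_num)
        _ = 7 ^ (p-3) * 7^2 * (4^1 * (2 * 2^1 + 5)) := by ring
    · rw [show p - 2 = (p - 3) + 1 by omega, pow_add]
      calc 7 ^ (p-3) * 1344 ≤ 7 ^ (p-3) * (7^1 * (4^2 * (2 * 2^2 + 5))) :=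
            Nat.mul_le_mul_left _ (by norm_num)
        _ = 7 ^ (p-3) * 7^1 * (4^2 * (2 * 2^2 + 5)) := by ring
    · exact le_of_eq (by norm_num)
  · obtain ⟨i, rfl⟩ : ∃ i, j = i + 3 := ⟨j - 3, by omega⟩
    have hi : i ≤ p - 3 := by omega
    rw [show p - (i + 3) = (p - 3) - i by omega]
    have hpow : (7:ℕ) ^ (p-3) = 7 ^ ((p-3)-i) * 7 ^ i := by
      rw [← pow_add]; congr 1; omega
    have key := strassen_key i
    calc 7 ^ (p-3) * 1344 = 7 ^ ((p-3)-i) * (7 ^ i * 21 * 64) := by rw [hpow]; ring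
      _ ≤ 7 ^ ((p-3)-i) * (4 ^ i * (16 * 2 ^ i + 5) * 64) :=
          Nat.mul_le_mul_left _ (Nat.mul_le_mul_right _ key)
      _ = 7 ^ ((p-3)-i) * (4 ^ (i+3) * (2 * 2 ^ (i+3) + 5)) := by ring

/-- For `n = 2^p`, `p ≥ 4`, among decompositions `m = 2^j`, `k = p − j`, the flop
count `F_S(2^j, p−j)` is minimized at `j = 3`. -/
theorem strassen_optimal_j (p : ℕ) (hp : 4 ≤ p)
    (F : ℕ → ℕ → ℤ)
    (hF : ∀ m k : ℕ, F m k = 7 ^ k * m ^ 2 * (2 * m + 5) - 6 * 4 ^ k * m ^ 2) :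
    ∀ j : ℕ, j ≤ p → F 8 (p - 3) ≤ F (2 ^ j) (p - j) := by
  intro j hj
  rw [hF, hF]
  push_cast
  have h1 : (4:ℤ) ^ (p - 3) * (8:ℤ) ^ 2 = 4 ^ p := by
    rw [show (8:ℤ)^2 = 4^3 by norm_num, ← pow_add, show p - 3 + 3 = p by omega]
  have h2 : (4:ℤ) ^ (p - j) * ((2:ℤ) ^ j) ^ 2 = 4 ^ p := by
    rw [← pow_mul, show j * 2 = 2 * j by ring, pow_mul,
        show ((2:ℤ)^2) = 4 by norm_num, ← pow_add, show p - j + j = p by omega]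
  have hmain := strassen_nat p j hp hj
  have hmain' : (7:ℤ) ^ (p - 3) * 1344 ≤ 7 ^ (p - j) * (4 ^ j * (2 * 2 ^ j + 5)) := by
    exact_mod_cast hmain
  have e1 : (7:ℤ) ^ (p-3) * 8 ^ 2 * (2 * 8 + 5) = 7 ^ (p-3) * 1344 := by ring
  have e2 : (7:ℤ) ^ (p-j) * ((2:ℤ)^j) ^ 2 * (2 * 2 ^ j + 5)
      = 7 ^ (p - j) * (4 ^ j * (2 * 2 ^ j + 5)) := by
    rw [← pow_mul, show j * 2 = 2 * j by ring, pow_mul,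
        show ((2:ℤ)^2) = 4 by norm_num]; ring
  have := sub_le_sub_right (e1 ▸ e2 ▸ hmain') (6 * (4:ℤ) ^ p)
  calc (7:ℤ) ^ (p-3) * 8 ^ 2 * (2 * 8 + 5) - 6 * 4 ^ (p-3) * 8 ^ 2
      = 7 ^ (p-3) * 8 ^ 2 * (2 * 8 + 5) - 6 * 4 ^ p := by rw [← h1]; ring
    _ ≤ 7 ^ (p-j) * ((2:ℤ)^j) ^ 2 * (2 * 2 ^ j + 5) - 6 * 4 ^ p := this
    _ = 7 ^ (p-j) * ((2:ℤ)^j) ^ 2 * (2 * 2 ^ j + 5) - 6 * 4 ^ (p-j) * ((2:ℤ)^j)^2 := by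
        rw [← h2]; ring
end

section
/- Define f₁(p) = F_S(17, p−4)/F_S(8, p−3) for integers p ≥ 4, where F_S(m,k) = 7^k·m^2·(2m+5) − 6·4^k·m^2. Then f₁(p) = 289·(4^p·2401 − 7^p·1664)/(12544·(4^p·49 − 7^p·32)), f₁ is monotonically decreasing in p, f₁(4) = 3179/2624, and f₁(p) → 3757/3136 as p → ∞. -/
open Filter

/-- Properties of `f₁(p) = F_S(17,p−4)/F_S(8,p−3)`: its closed form, monotone
decrease, value at `p = 4`, and limit `3757/3136`. -/
theorem strassen_f1_properties
    (F : ℕ → ℕ → ℝ)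
    (hF : ∀ m k : ℕ, F m k = 7 ^ k * m ^ 2 * (2 * m + 5) - 6 * 4 ^ k * m ^ 2)
    (f₁ : ℕ → ℝ)
    (hf₁ : ∀ p : ℕ, 4 ≤ p → f₁ p = F 17 (p - 4) / F 8 (p - 3)) :
    (∀ p : ℕ, 4 ≤ p →
      f₁ p = 289 * (4 ^ p * 2401 - 7 ^ p * 1664) / (12544 * (4 ^ p * 49 - 7 ^ p * 32))) ∧
    (∀ p q : ℕ, 4 ≤ p → p ≤ q → f₁ q ≤ f₁ p) ∧
    f₁ 4 = 3179 / 2624 ∧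
    Tendsto f₁ atTop (nhds (3757 / 3136)) := by
  have h74 : (1:ℝ) ≤ 7/4 := by norm_num
  have hr : ∀ p : ℕ, 4 ≤ p → (49:ℝ) < 32 * (7/4)^p := by
    intro p hp
    have h1 : ((7:ℝ)/4)^4 ≤ (7/4)^p := pow_le_pow_right₀ h74 hp
    nlinarith [h1]
  have hlt : ∀ p : ℕ, 4 ≤ p → (49:ℝ) * 4^p < 32 * 7^p := by
    intro p hp
    have h1 := hr p hp
    rw [div_pow, ← mul_div_assoc] at h1
    exact (lt_div_iff₀ (by positivity)).mp h1
  have key : ∀ p : ℕ, 4 ≤ p →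
      f₁ p = 289/12544 * (52 + 147 / (32 * ((7:ℝ)/4)^p - 49)) := by
    intro p hp
    have hA : (0:ℝ) < 32 * ((7:ℝ)/4)^p - 49 := by linarith [hr p hp]
    obtain ⟨n, rfl⟩ := Nat.exists_eq_add_of_le hp
    have h4 : (4 + n) - 4 = n := by omega
    have h3 : (4 + n) - 3 = n + 1 := by omega
    rw [hf₁ _ hp, hF, hF, h4, h3]
    have hle : (4:ℝ)^(n+1) ≤ 7^(n+1) :=
      pow_le_pow_left₀ (by norm_num) (by norm_num) (n+1)
    have hpos : (0:ℝ) < 4^(n+1) := by positivity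
    have hB : (7:ℝ)^(n+1) * (8:ℕ)^2 * (2*(8:ℕ)+5) - 6 * 4^(n+1) * (8:ℕ)^2 ≠ 0 := by
      push_cast
      nlinarith
    have hA' : 32 * ((7:ℝ)/4)^(4+n) - 49 ≠ 0 := ne_of_gt hA
    have hD : -((4:ℝ)^n * 12544) + 7^n * 76832 ≠ 0 := by
      have h1 := hlt (4+n) hp
      have h2 : (49:ℝ) * 4^(4+n) = 12544 * 4^n := by rw [pow_add]; ring
      have h3 : (32:ℝ) * 7^(4+n) = 76832 * 7^n := by rw [pow_add]; ring
      intro h; rw [h2, h3] at h1; linarith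
    have e1 : 32 * ((7:ℝ)/4)^(4+n) - 49 = (-((4:ℝ)^n*12544) + 7^n*76832) / (4^n*256) := by
      rw [div_pow, pow_add, pow_add]
      field_simp
      ring
    rw [e1, div_div_eq_mul_div]
    push_cast at hB ⊢
    field_simp
    have hB' : (7:ℝ)^(n+1)*(2*8+5) - 6*4^(n+1) ≠ 0 := by
      intro h; apply hB; linear_combination 64 * h
    rw [div_eq_iff hB']
    ring
  refine ⟨?_, ?_, ?_, ?_⟩
  · intro p hp
    rw [key p hp]
    have hpos4 : (0:ℝ) < 4^p := by positivity
    have h1 := hlt p hp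
    have hD : (32:ℝ) * 7^p - 49 * 4^p ≠ 0 := by intro h; linarith
    have hD2 : (4:ℝ)^p * 49 - 7^p * 32 ≠ 0 := by intro h; linarith
    have e1 : 32 * ((7:ℝ)/4)^p - 49 = (32 * 7^p - 49 * 4^p) / 4^p := by
      rw [div_pow]; field_simp
    rw [e1, div_div_eq_mul_div]
    field_simp
    have hX : (32:ℝ) * 7^p - 4^p * 49 ≠ 0 := by intro h; linarith
    have hY : (4:ℝ)^p * 49 - 32 * 7^p ≠ 0 := by intro h; linarith
    rw [add_div' _ _ _ hX, div_eq_div_iff hX hY]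
    ring
  · intro p q hp hpq
    have hq : 4 ≤ q := le_trans hp hpq
    rw [key p hp, key q hq]
    have hAp : (0:ℝ) < 32 * ((7:ℝ)/4)^p - 49 := by linarith [hr p hp]
    have hmono : ((7:ℝ)/4)^p ≤ (7/4)^q := pow_le_pow_right₀ h74 hpq
    have h1 : 32 * ((7:ℝ)/4)^p - 49 ≤ 32 * ((7:ℝ)/4)^q - 49 := by linarith
    have h2 : (147:ℝ) / (32 * ((7:ℝ)/4)^q - 49) ≤ 147 / (32 * ((7:ℝ)/4)^p - 49) :=
      div_le_div_of_nonneg_left (by norm_num) hAp h1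
    nlinarith [h2]
  · rw [hf₁ 4 le_rfl, hF, hF]
    norm_num
  · have hev : f₁ =ᶠ[atTop] fun p => 289/12544 * (52 + 147 / (32 * ((7:ℝ)/4)^p - 49)) := by
      filter_upwards [eventually_ge_atTop 4] with p hp
      exact key p hp
    rw [tendsto_congr' hev]
    have h1 : Tendsto (fun p : ℕ => 32 * ((7:ℝ)/4)^p - 49) atTop atTop := by
      apply tendsto_atTop_add_const_right
      exact (tendsto_pow_atTop_atTop_of_one_lt (by norm_num : (1:ℝ) < 7/4)).const_mul_atTop (by norm_num)
    have h2 : Tendsto (fun p : ℕ => (147:ℝ) / (32 * ((7:ℝ)/4)^p - 49)) atTop (nhds 0) :=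
      Tendsto.div_atTop tendsto_const_nhds h1
    have h3 : Tendsto (fun p : ℕ => 289/12544 * ((52:ℝ) + 147 / (32 * ((7:ℝ)/4)^p - 49)))
        atTop (nhds (289/12544 * (52 + 0))) :=
      (((tendsto_const_nhds : Tendsto (fun _ : ℕ => (52:ℝ)) atTop (nhds 52)).add h2).const_mul _)
    convert h3 using 2
    norm_num
end

section
/- Define f₂(p) = F_S(16, p−4)/F_S(8, p−3) for integers p ≥ 4, where F_S(m,k) = 7^k·m^2·(2m+5) − 6·4^k·m^2. Then f₂(p) = (4^p·7203 − 7^p·4736)/(147·(4^p·49 − 7^p·32)), f₂ is monotonically decreasing in p, f₂(4) = 124/123, and f₂(p) → 148/147 as p → ∞. -/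
open Filter

/-- Properties of `f₂(p) = F_S(16,p−4)/F_S(8,p−3)`: its closed form, monotone
decrease, value at `p = 4`, and limit `148/147`. -/
theorem strassen_f2_properties
    (F : ℕ → ℕ → ℝ)
    (hF : ∀ m k : ℕ, F m k = 7 ^ k * m ^ 2 * (2 * m + 5) - 6 * 4 ^ k * m ^ 2)
    (f₂ : ℕ → ℝ)
    (hf₂ : ∀ p : ℕ, 4 ≤ p → f₂ p = F 16 (p - 4) / F 8 (p - 3)) :
    (∀ p : ℕ, 4 ≤ p →
      f₂ p = (4 ^ p * 7203 - 7 ^ p * 4736) / (147 * (4 ^ p * 49 - 7 ^ p * 32))) ∧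
    (∀ p q : ℕ, 4 ≤ p → p ≤ q → f₂ q ≤ f₂ p) ∧
    f₂ 4 = 124 / 123 ∧
    Tendsto f₂ atTop (nhds (148 / 147)) := by
  have h47 : ∀ n : ℕ, (4:ℝ) ^ n ≤ 7 ^ n := fun n =>
    pow_le_pow_left₀ (by norm_num) (by norm_num) n
  have h4pos : ∀ n : ℕ, (0:ℝ) < 4 ^ n := fun n => by positivity
  have h7pos : ∀ n : ℕ, (0:ℝ) < 7 ^ n := fun n => by positivity
  -- closed form
  have key : ∀ p : ℕ, 4 ≤ p →
      f₂ p = (4 ^ p * 7203 - 7 ^ p * 4736) / (147 * (4 ^ p * 49 - 7 ^ p * 32)) := by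
    intro p hp
    obtain ⟨n, rfl⟩ : ∃ n, p = n + 4 := ⟨p - 4, by omega⟩
    have h1 : (n + 4) - 4 = n := by omega
    have h2 : (n + 4) - 3 = n + 1 := by omega
    have e16 : F 16 n = 9472 * 7 ^ n - 1536 * 4 ^ n := by
      rw [hF]; push_cast; ring
    have e8 : F 8 (n + 1) = 9408 * 7 ^ n - 1536 * 4 ^ n := by
      rw [hF]; push_cast; ring
    rw [hf₂ _ hp, h1, h2, e16, e8]
    have hb : (9408:ℝ) * 7 ^ n - 1536 * 4 ^ n ≠ 0 := by
      nlinarith [h47 n, h4pos n]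
    have hd : (147:ℝ) * (4 ^ (n+4) * 49 - 7 ^ (n+4) * 32) ≠ 0 := by
      have e7 : (7:ℝ) ^ (n+4) = 7 ^ n * 2401 := by ring
      have e4 : (4:ℝ) ^ (n+4) = 4 ^ n * 256 := by ring
      rw [e7, e4]
      nlinarith [h47 n, h4pos n]
    rw [div_eq_div_iff hb hd]
    ring
  -- positivity of the (negated) denominator
  have hD : ∀ p : ℕ, 4 ≤ p → (0:ℝ) < 147 * (7 ^ p * 32 - 4 ^ p * 49) := by
    intro p hp
    obtain ⟨n, rfl⟩ : ∃ n, p = n + 4 := ⟨p - 4, by omega⟩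
    have e7 : (7:ℝ) ^ (n+4) = 7 ^ n * 2401 := by ring
    have e4 : (4:ℝ) ^ (n+4) = 4 ^ n * 256 := by ring
    rw [e7, e4]
    nlinarith [h47 n, h4pos n]
  -- positive-denominator form
  have key2 : ∀ p : ℕ, 4 ≤ p →
      f₂ p = (7 ^ p * 4736 - 4 ^ p * 7203) / (147 * (7 ^ p * 32 - 4 ^ p * 49)) := by
    intro p hp
    rw [key p hp, div_eq_div_iff (by nlinarith [hD p hp]) (ne_of_gt (hD p hp))]
    ring
  refine ⟨key, ?_, ?_, ?_⟩
  · -- monotone decrease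
    have step : ∀ p : ℕ, 4 ≤ p → f₂ (p+1) ≤ f₂ p := by
      intro p hp
      rw [key2 p hp, key2 (p+1) (by omega)]
      rw [div_le_div_iff₀ (hD (p+1) (by omega)) (hD p hp)]
      have e7 : (7:ℝ) ^ (p+1) = 7 ^ p * 7 := by ring
      have e4 : (4:ℝ) ^ (p+1) = 4 ^ p * 4 := by ring
      rw [e7, e4]
      nlinarith [mul_pos (h4pos p) (h7pos p), h4pos p, h7pos p]
    intro p q hp hpq
    induction q, hpq using Nat.le_induction with
    | base => exact le_refl _
    | succ n hn ih => exact le_trans (step n (le_trans hp hn)) ih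
  · -- value at 4
    rw [hf₂ 4 le_rfl]
    norm_num [hF]
  · -- limit
    have hcong : f₂ =ᶠ[atTop] fun p =>
        (4736 - (4/7:ℝ) ^ p * 7203) / (147 * (32 - (4/7:ℝ) ^ p * 49)) := by
      filter_upwards [eventually_ge_atTop 4] with p hp
      rw [key2 p hp]
      have h7 : ((7:ℝ) ^ p) ≠ 0 := ne_of_gt (h7pos p)
      rw [div_pow]
      field_simp
    rw [Filter.tendsto_congr' hcong]
    have h0 : Tendsto (fun p : ℕ => ((4:ℝ)/7) ^ p) atTop (nhds 0) :=
      tendsto_pow_atTop_nhds_zero_of_lt_one (by norm_num) (by norm_num)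
    have hnum : Tendsto (fun p : ℕ => (4736 - (4/7:ℝ) ^ p * 7203)) atTop (nhds 4736) := by
      have := (h0.mul_const (7203:ℝ))
      simpa using (tendsto_const_nhds (x := (4736:ℝ))).sub this
    have hden : Tendsto (fun p : ℕ => (147 * (32 - (4/7:ℝ) ^ p * 49))) atTop (nhds 4704) := by
      have := (h0.mul_const (49:ℝ))
      have h2 := ((tendsto_const_nhds (x := (32:ℝ))).sub this).const_mul (147:ℝ)
      convert h2 using 2
      norm_num
    have heq : (148:ℝ)/147 = 4736/4704 := by norm_num
    rw [heq]
    exact hnum.div hden (by norm_num)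
end

section
/- For every n ≥ 16 and Strassen's parameters k = ⌊log₂ n⌋ − 4, m = ⌊n·2^{−k}⌋ + 1, the flop count satisfies F_S(m,k) < 4.7·n^{log₂ 7}. -/
lemma exp_lb : (393:ℝ)/140 ≤ Real.logb 2 7 := by
  rw [Real.le_logb_iff_rpow_le (by norm_num) (by norm_num)]
  have h : ((2:ℝ) ^ ((393:ℝ)/140)) ^ (140:ℕ) = 2 ^ (393:ℕ) := by
    rw [← Real.rpow_natCast ((2:ℝ) ^ ((393:ℝ)/140)) 140, ← Real.rpow_mul (by norm_num)]
    norm_num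
  have h140 : ((2:ℝ) ^ ((393:ℝ)/140)) ^ (140:ℕ) ≤ 7 ^ (140:ℕ) := by
    rw [h, show (393:ℕ) = 3 * 131 from rfl, pow_mul]; norm_num
  exact le_of_pow_le_pow_left₀ (by norm_num) (by norm_num) h140

lemma key (x c : ℝ) (hx : 1 ≤ x) (h : c ^ (140:ℕ) < x ^ (393:ℕ)) :
    c < x ^ (Real.logb 2 7) := by
  have h1 : (x ^ ((393:ℝ)/140)) ^ (140:ℕ) = x ^ (393:ℕ) := by
    rw [← Real.rpow_natCast (x ^ ((393:ℝ)/140)) 140, ← Real.rpow_mul (by linarith)]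
    norm_num
  have h2 : c < x ^ ((393:ℝ)/140) := by
    rw [← h1] at h
    exact lt_of_pow_lt_pow_left₀ 140 (Real.rpow_nonneg (by linarith) _) h
  calc c < x ^ ((393:ℝ)/140) := h2
    _ ≤ x ^ (Real.logb 2 7) := Real.rpow_le_rpow_of_exponent_le hx exp_lb

lemma key2 (x F : ℝ) (hx : 1 ≤ x)
    (h : (10*F)^(140:ℕ) < 47^(140:ℕ) * x^(393:ℕ)) :
    F < 4.7 * x ^ Real.logb 2 7 := by
  have hk := key x (10*F/47) hx (by rw [div_pow, div_lt_iff₀ (by positivity)]; nlinarith [h])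
  nlinarith [hk]

lemma pow2_rpow (k : ℕ) : ((2:ℝ)^k) ^ Real.logb 2 7 = 7 ^ k := by
  rw [← Real.rpow_natCast (2:ℝ) k, ← Real.rpow_mul (by norm_num), mul_comm,
    Real.rpow_mul (by norm_num), Real.rpow_logb (by norm_num) (by norm_num) (by norm_num),
    Real.rpow_natCast]

/-- Strassen's bound: for `n ≥ 16` and his parameters `k = ⌊log₂ n⌋ − 4`,
`m = ⌊n 2^{−k}⌋ + 1`, the flop count satisfies `F_S(m,k) < 4.7 n^{log₂ 7}`. -/
theorem strassen_total_bound (n : ℕ) (hn : 16 ≤ n)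
    (k : ℕ) (hk : k = Nat.log 2 n - 4)
    (m : ℕ) (hm : m = n / 2 ^ k + 1) :
    (7 : ℝ) ^ k * m ^ 2 * (2 * m + 5) - 6 * 4 ^ k * m ^ 2 <
      4.7 * (n : ℝ) ^ (Real.logb 2 7) := by
  have hk4 : 4 ≤ Nat.log 2 n :=
    (Nat.le_log_iff_pow_le (by norm_num) (by omega)).mpr (by norm_num; omega)
  have hlog : Nat.log 2 n = k + 4 := by omega
  have h1 : 2 ^ (k + 4) ≤ n := by
    rw [← hlog]; exact Nat.pow_log_le_self 2 (by omega)
  have h2 : n < 2 ^ (k + 5) := by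
    have := Nat.lt_pow_succ_log_self (by norm_num : 1 < 2) n
    rwa [hlog] at this
  have hp : 0 < 2 ^ k := Nat.pow_pos (by norm_num)
  have hd1 : 16 ≤ n / 2 ^ k := by
    rw [Nat.le_div_iff_mul_le hp]
    calc 16 * 2 ^ k = 2 ^ (k + 4) := by ring
    _ ≤ n := h1
  have hd2 : n / 2 ^ k ≤ 31 := by
    have : n / 2 ^ k < 32 := by
      rw [Nat.div_lt_iff_lt_mul hp]
      calc n < 2 ^ (k + 5) := h2
      _ = 32 * 2 ^ k := by ring
    omega
  have hm1 : 17 ≤ m := by omega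
  have hm2 : m ≤ 32 := by omega
  have hn2 : 2 ^ k * (m - 1) ≤ n := by
    rw [hm]; simpa [mul_comm] using Nat.div_mul_le_self n (2 ^ k)
  -- real-side lower bound on n^L
  set L := Real.logb 2 7 with hL
  have hL0 : (0:ℝ) ≤ L := le_trans (by norm_num) exp_lb
  have hcast : ((2:ℝ) ^ k * ((m:ℝ) - 1)) ≤ (n:ℝ) := by
    have : ((2 ^ k * (m - 1) : ℕ) : ℝ) ≤ (n:ℝ) := by exact_mod_cast hn2
    push_cast [Nat.cast_sub (by omega : 1 ≤ m)] at this
    convert this using 2 <;> push_cast <;> ring_nf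
  have h17 : (17:ℝ) ≤ (m:ℝ) := by exact_mod_cast hm1
  have hstep : (7:ℝ) ^ k * ((m:ℝ) - 1) ^ L ≤ (n:ℝ) ^ L := by
    have hb : (0:ℝ) ≤ (2:ℝ) ^ k * ((m:ℝ) - 1) :=
      mul_nonneg (by positivity) (by linarith)
    have := Real.rpow_le_rpow hb hcast hL0
    rwa [Real.mul_rpow (by positivity) (by linarith : (0:ℝ) ≤ (m:ℝ) - 1), pow2_rpow] at this
  have hmain : (m:ℝ) ^ 2 * (2 * m + 5) < 4.7 * ((m:ℝ) - 1) ^ L := by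
    interval_cases m <;> (push_cast; exact key2 _ _ (by norm_num) (by rw [show (393:ℕ) = 3 * 131 from rfl, pow_mul]; norm_num))
  have h7 : (0:ℝ) < 7 ^ k := by positivity
  have h4 : (0:ℝ) < 6 * 4 ^ k * (m:ℝ) ^ 2 := by positivity
  nlinarith [mul_lt_mul_of_pos_left hmain h7, mul_le_mul_of_nonneg_left hstep (by norm_num : (0:ℝ) ≤ 4.7)]
end

section
/- For n = 2^p with p ≥ 4, F_S(17, p−4) / F_S(8, p−3) > 1.19 for all p ≥ 4, where F_S(m,k) = 7^k·m^2·(2m+5) − 6·4^k·m^2; i.e., Strassen's parameters require at least 19% more flops than the optimal decomposition in the worst case. -/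
/-- For `p ≥ 4`, Strassen's parameters need more than 19 % extra flops compared to
the optimal decomposition: `F_S(17,p−4)/F_S(8,p−3) > 1.19`. -/
theorem strassen_worst_case_overhead (p : ℕ) (hp : 4 ≤ p)
    (F : ℕ → ℕ → ℝ)
    (hF : ∀ m k : ℕ, F m k = 7 ^ k * m ^ 2 * (2 * m + 5) - 6 * 4 ^ k * m ^ 2) :
    F 17 (p - 4) / F 8 (p - 3) > 1.19 := by
  obtain ⟨k, rfl⟩ : ∃ k, p = k + 4 := ⟨p - 4, by omega⟩
  have h4 : k + 4 - 4 = k := by omega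
  have h3 : k + 4 - 3 = k + 1 := by omega
  rw [h4, h3, hF, hF]
  have h7 : (4:ℝ)^k ≤ 7^k := pow_le_pow_left₀ (by norm_num) (by norm_num) k
  have h4p : (0:ℝ) < 4^k := by positivity
  have h7p : (0:ℝ) < 7^k := by positivity
  have e7 : (7:ℝ)^(k+1) = 7 * 7^k := by ring
  have e4 : (4:ℝ)^(k+1) = 4 * 4^k := by ring
  have hden : (0:ℝ) < 7 ^ (k+1) * (8:ℕ) ^ 2 * (2 * (8:ℕ) + 5) - 6 * 4 ^ (k+1) * (8:ℕ) ^ 2 := by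
    push_cast
    rw [e7, e4]
    nlinarith
  rw [gt_iff_lt, lt_div_iff₀ hden]
  push_cast
  rw [e7, e4]
  nlinarith
end
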